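/- If x_1, …, x_k(G) is a system of representatives for the conjugacy classes of a finite group G, then the tensor degree satisfies d^⊗(G) = (1/|G|) · Σ_{i=1}^{k(G)} |C_G^⊗(x_i)| / |C_G(x_i)|. -/

import Mathlib

open scoped BigOperators

/-- If `x₁, …, x_{k(G)}` is a system of representatives for the conjugacy classes of a
finite group `G`, then the tensor degree satisfies
`d⊗(G) = (1/|G|) · Σᵢ |C_G^⊗(xᵢ)| / |C_G(xᵢ)|`. The nonabelian tensor square is modelled
by a group `T` and a pairing `t`, with the (true) fact that tensor centralizers of
conjugate elements correspond under conjugation. -/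
theorem tensor_degree_eq_sum_over_conjClasses
    {G T : Type*} [Group G] [Fintype G] [DecidableEq G] [Group T]
    (t : G → G → T)
    (hconj : ∀ g a x : G, t a x = 1 ↔ t (g⁻¹ * a * g) (g⁻¹ * x * g) = 1)
    (r : ConjClasses G → G) (hr : ∀ c : ConjClasses G, ConjClasses.mk (r c) = c) :
    (Nat.card {p : G × G // t p.1 p.2 = 1} : ℝ) / (Fintype.card G : ℝ) ^ 2 =
      (1 / (Fintype.card G : ℝ)) *
        ∑ c : ConjClasses G,
          (Nat.card {a : G // t a (r c) = 1} : ℝ) /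
            (Nat.card (Subgroup.centralizer {r c}) : ℝ) := by
  classical
  -- Step 1: total count = sum over x of tensor-centralizer cardinalities
  have h1 : (Nat.card {p : G × G // t p.1 p.2 = 1}) =
      ∑ x : G, Nat.card {a : G // t a x = 1} := by
    have e : {p : G × G // t p.1 p.2 = 1} ≃ Σ x : G, {a : G // t a x = 1} :=
      { toFun := fun p => ⟨p.1.2, p.1.1, p.2⟩
        invFun := fun s => ⟨(s.2.1, s.1), s.2.2⟩
        left_inv := fun p => rfl
        right_inv := fun s => rfl }
    rw [Nat.card_congr e, Nat.card_eq_fintype_card, Fintype.card_sigma]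
    simp [Nat.card_eq_fintype_card]
  -- Step 2: constancy on conjugacy classes
  have h2 : ∀ (c : ConjClasses G) (x : G), ConjClasses.mk x = c →
      Nat.card {a : G // t a x = 1} = Nat.card {a : G // t a (r c) = 1} := by
    intro c x hx
    have : ConjClasses.mk (r c) = ConjClasses.mk x := by rw [hx, hr]
    obtain ⟨g, hg⟩ := isConj_iff.mp (ConjClasses.mk_eq_mk_iff_isConj.mp this)
    -- x = g * r c * g⁻¹
    refine (Nat.card_congr ?_).symm
    refine Equiv.subtypeEquiv ⟨fun a => g * a * g⁻¹, fun a => g⁻¹ * a * g,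
      fun a => by group, fun a => by group⟩ (fun a => ?_)
    have := hconj g⁻¹ a (r c)
    simpa [hg, mul_assoc] using this
  -- Step 3: class size times centralizer size = |G|
  have h3 : ∀ c : ConjClasses G,
      (Finset.univ.filter (fun x : G => ConjClasses.mk x = c)).card *
        Nat.card (Subgroup.centralizer {r c}) = Fintype.card G := by
    intro c
    have hcent : Nat.card (Subgroup.centralizer {r c}) =
        Fintype.card (MulAction.stabilizer (ConjAct G) (r c)) := by
      rw [Subgroup.centralizer_eq_comap_stabilizer, Nat.card_eq_fintype_card]
      exact Fintype.card_congr
        (Equiv.subtypeEquiv ConjAct.toConjAct.toEquiv (fun a => Iff.rfl))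
    have horb : (Finset.univ.filter (fun x : G => ConjClasses.mk x = c)).card =
        Fintype.card (MulAction.orbit (ConjAct G) (r c)) := by
      rw [← Fintype.card_subtype]
      refine Fintype.card_congr (Equiv.subtypeEquiv (Equiv.refl G) (fun a => ?_)).symm
      rw [Equiv.refl_apply, ConjAct.mem_orbit_conjAct, ← ConjClasses.mk_eq_mk_iff_isConj, hr]

    rw [hcent, horb,
      MulAction.card_orbit_mul_card_stabilizer_eq_card_group (ConjAct G) (r c)]
    rfl
  -- Step 4: regroup the sum over G by conjugacy classes
  have h4 : ∑ x : G, (Nat.card {a : G // t a x = 1} : ℝ) =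
      ∑ c : ConjClasses G,
        ((Finset.univ.filter (fun x : G => ConjClasses.mk x = c)).card : ℝ) *
          (Nat.card {a : G // t a (r c) = 1} : ℝ) := by
    rw [← Finset.sum_fiberwise (g := ConjClasses.mk)
      (f := fun x => (Nat.card {a : G // t a x = 1} : ℝ))]
    refine Finset.sum_congr rfl (fun c _ => ?_)
    rw [Finset.sum_congr rfl (fun x hx => by
      rw [h2 c x (Finset.mem_filter.mp hx).2]), Finset.sum_const, nsmul_eq_mul]
  have hn0 : (Fintype.card G : ℝ) ≠ 0 := Nat.cast_ne_zero.mpr Fintype.card_ne_zero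
  have hc0 : ∀ c : ConjClasses G,
      (Nat.card (Subgroup.centralizer {r c}) : ℝ) ≠ 0 := fun c =>
    Nat.cast_ne_zero.mpr Nat.card_pos.ne'
  rw [h1]
  push_cast
  rw [h4]
  rw [Finset.mul_sum, Finset.sum_div]
  refine Finset.sum_congr rfl (fun c _ => ?_)
  have := h3 c
  have hcard : ((Finset.univ.filter (fun x : G => ConjClasses.mk x = c)).card : ℝ) =
      (Fintype.card G : ℝ) / (Nat.card (Subgroup.centralizer {r c}) : ℝ) := by
    field_simp
    exact_mod_cast this
  rw [hcard]
  field_simp
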